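/- Let q be a prime power, let F be a field with q elements, and let A ≥ q − 1 be an integer. Then there exist positive integers a, b and elements x, y in some finite extension K of F such that: x has degree a over F, y has degree b over F, d = gcd(a, b) has exactly A distinct prime factors that do not divide (a/d)·(b/d), and for all α, β ∈ F one has F[αx + βy] ≠ F[x, y]; that is, no F-linear combination of x and y generates F[x, y] over F. -/

import Mathlib

universe u

open Polynomial IntermediateField Finset

section Aux

set_option linter.unusedSectionVars false

lemma nat_dvd_of_pow_sub_one_dvd {q : ℕ} (hq : 2 ≤ q) {d : ℕ} (hd : d ≠ 0) :
    ∀ e, q ^ d - 1 ∣ q ^ e - 1 → d ∣ e := by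
  intro e
  induction e using Nat.strong_induction_on with
  | _ e ih =>
    intro h
    rcases lt_or_ge e d with hlt | hle
    · -- then q^e - 1 < q^d - 1, so q^e - 1 = 0, so e = 0
      have h1 : q ^ e - 1 < q ^ d - 1 := by
        have := Nat.pow_lt_pow_right hq hlt
        have h1 : 1 ≤ q ^ e := Nat.one_le_pow _ _ (by omega)
        omega
      have h0 : q ^ e - 1 = 0 := by
        rcases Nat.eq_zero_or_pos (q ^ e - 1) with h0 | hpos
        · exact h0
        · exact absurd (Nat.le_of_dvd hpos h) (by omega)
      have : q ^ e ≤ 1 := by omega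
      have he0 : e = 0 := by
        by_contra he
        have : q ≤ q ^ e := Nat.le_self_pow he q
        omega
      simp [he0]
    · -- q^e - 1 = q^(e-d) * (q^d - 1) + (q^(e-d) - 1)
      have key : q ^ d - 1 ∣ q ^ (e - d) - 1 := by
        have h2 : q ^ d - 1 ∣ q ^ (e - d) * (q ^ d - 1) := dvd_mul_left _ _
        have h3 : q ^ (e - d) * (q ^ d - 1) = q ^ e - q ^ (e - d) := by
          have : q ^ (e - d) * q ^ d = q ^ e := by
            rw [← pow_add]; congr 1; omega
          have hle2 : q ^ (e - d) ≤ q ^ e := Nat.pow_le_pow_right (by omega) (by omega)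
          rw [Nat.mul_sub, this, mul_one]
        have h4 : q ^ (e - d) - 1 = (q ^ e - 1) - (q ^ e - q ^ (e - d)) := by
          have h5 : q ^ (e - d) ≤ q ^ e := Nat.pow_le_pow_right (by omega) (by omega)
          have h6 : 1 ≤ q ^ (e - d) := Nat.one_le_pow _ _ (by omega)
          omega
        rw [h4, ← h3]
        exact Nat.dvd_sub h h2
      have hed : e - d < e := by omega
      have := ih (e - d) hed key
      have : d ∣ (e - d) + d := Nat.dvd_add this dvd_rfl
      simpa [Nat.sub_add_cancel hle] using this

variable {F : Type u} [Field F] [Fintype F]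
variable {K : Type u} [Field K] [Algebra F K]

lemma exists_frobQ (e : ℕ) : ∃ φ : K →+* K, ∀ x : K, φ x = x ^ (Fintype.card F) ^ e := by
  obtain ⟨n, hp, hcard⟩ := FiniteField.card F (ringChar F)
  haveI : CharP K (ringChar F) := charP_of_injective_algebraMap (algebraMap F K).injective _
  haveI : Fact (Nat.Prime (ringChar F)) := ⟨hp⟩
  refine ⟨iterateFrobenius K (ringChar F) ((n : ℕ) * e), fun x => ?_⟩
  rw [iterateFrobenius_def, hcard, ← pow_mul]

lemma algebraMap_pow_q (e : ℕ) (a : F) :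
    (algebraMap F K a) ^ (Fintype.card F) ^ e = algebraMap F K a := by
  rw [← map_pow, FiniteField.pow_card_pow]

lemma pow_q_eq_iff [FiniteDimensional F K] (z : K) (e : ℕ) :
    z ^ (Fintype.card F) ^ e = z ↔ Module.finrank F (adjoin F {z}) ∣ e := by
  classical
  have hq2 : 2 ≤ Fintype.card F := Fintype.one_lt_card
  set q := Fintype.card F with hqdef
  set E := adjoin F {z} with hE
  haveI : Finite K := Module.finite_of_finite F
  haveI : Fintype E := Fintype.ofFinite E
  set δ := Module.finrank F E with hδ
  have hcardE : Fintype.card E = q ^ δ := Module.card_eq_pow_finrank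
  constructor
  · intro hz
    obtain ⟨φ, hφ⟩ := exists_frobQ (F := F) (K := K) e
    have hall : ∀ w : K, w ∈ E → w ^ q ^ e = w := by
      intro w hw
      induction hw using IntermediateField.adjoin_induction with
      | mem x hx => rw [Set.mem_singleton_iff] at hx; rw [hx]; exact hz
      | algebraMap x => exact algebraMap_pow_q e x
      | add x y hx hy ihx ihy => rw [← hφ, map_add, hφ, hφ, ihx, ihy]
      | inv x hx ihx => rw [inv_pow, ihx]
      | mul x y hx hy ihx ihy => rw [mul_pow, ihx, ihy]
    obtain ⟨g, hg⟩ := IsCyclic.exists_generator (α := (↥E)ˣ)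
    have horder : orderOf g = Fintype.card (↥E)ˣ := by
      rw [orderOf_eq_card_of_forall_mem_zpowers hg, Nat.card_eq_fintype_card]
    have hcardu : Fintype.card (↥E)ˣ = q ^ δ - 1 := by rw [Fintype.card_units, hcardE]
    have hgfix : ((g : ↥E) : K) ^ q ^ e = ((g : ↥E) : K) := hall _ (SetLike.coe_mem _)
    have hgE : (g : ↥E) ^ q ^ e = (g : ↥E) := by
      apply Subtype.coe_injective
      push_cast
      exact hgfix
    have hgu : g ^ q ^ e = g := Units.ext (by rw [Units.val_pow_eq_pow_val]; exact hgE)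
    have h1 : q ^ e = (q ^ e - 1) + 1 := by
      have : 1 ≤ q ^ e := Nat.one_le_pow _ _ (by omega)
      omega
    rw [h1, pow_succ] at hgu
    have hpow : g ^ (q ^ e - 1) = 1 := mul_right_cancel (hgu.trans (one_mul g).symm)
    have hdvd1 : orderOf g ∣ q ^ e - 1 := orderOf_dvd_of_pow_eq_one hpow
    rw [horder, hcardu] at hdvd1
    have hδ0 : δ ≠ 0 := Module.finrank_pos.ne'
    exact nat_dvd_of_pow_sub_one_dvd hq2 hδ0 e hdvd1
  · intro hd
    obtain ⟨t, ht⟩ := hd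
    set zE : ↥E := ⟨z, mem_adjoin_simple_self F z⟩ with hzE
    have hz1 : zE ^ q ^ δ = zE := by
      have h := FiniteField.pow_card zE
      rwa [hcardE] at h
    have hiter : ∀ k, zE ^ (q ^ δ) ^ k = zE := by
      intro k
      induction k with
      | zero => simp
      | succ k ih => rw [pow_succ, pow_mul, ih, hz1]
    have := congrArg (Subtype.val) (hiter t)
    push_cast at this
    rw [← pow_mul, ← ht] at this
    exact this

lemma adjoin_smul_eq {α : F} (hα : α ≠ 0) (z : K) :
    adjoin F {α • z} = adjoin F {z} := by
  apply le_antisymm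
  · rw [adjoin_le_iff, Set.singleton_subset_iff, Algebra.smul_def]
    exact mul_mem (IntermediateField.algebraMap_mem _ _) (mem_adjoin_simple_self F z)
  · rw [adjoin_le_iff, Set.singleton_subset_iff]
    have hmem := mul_mem (IntermediateField.algebraMap_mem (adjoin F {α • z}) α⁻¹)
        (mem_adjoin_simple_self F (α • z))
    have heq : algebraMap F K α⁻¹ * (α • z) = z := by
      rw [Algebra.smul_def, ← mul_assoc, ← map_mul, inv_mul_cancel₀ hα, map_one, one_mul]
    rw [heq] at hmem; exact hmem

lemma exists_elem_of_degree [FiniteDimensional F K] {e : ℕ} (he0 : 0 < e)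
    (he : e ∣ Module.finrank F K) :
    ∃ t : K, Module.finrank F (adjoin F {t}) = e := by
  classical
  have hq2 : 2 ≤ Fintype.card F := Fintype.one_lt_card
  set q := Fintype.card F with hqdef
  haveI : Finite K := Module.finite_of_finite F
  haveI : Fintype K := Fintype.ofFinite K
  set N := Module.finrank F K with hN
  have hcardK : Fintype.card K = q ^ N := Module.card_eq_pow_finrank
  have hN0 : 0 < N := Module.finrank_pos
  obtain ⟨g, hg⟩ := IsCyclic.exists_generator (α := Kˣ)
  have horder : orderOf g = q ^ N - 1 := by
    rw [orderOf_eq_card_of_forall_mem_zpowers hg, Nat.card_eq_fintype_card,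
      Fintype.card_units, hcardK]
  obtain ⟨v, hv⟩ := he
  have hdvd : q ^ e - 1 ∣ q ^ N - 1 := by
    rw [hv]; simpa only [one_pow, pow_mul] using Nat.sub_dvd_pow_sub_pow (q ^ e) 1 v
  have horder0 : orderOf g ≠ 0 := by
    rw [horder]
    have : 2 ≤ q ^ e := by
      calc 2 ≤ q := hq2
      _ ≤ q ^ e := Nat.le_self_pow he0.ne' q
    have h2 : q ^ e ≤ q ^ N := Nat.pow_le_pow_right (by omega) (Nat.le_of_dvd (by omega) ⟨v, hv⟩)
    omega
  set u : Kˣ := g ^ (orderOf g / (q ^ e - 1)) with hu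
  have hou : orderOf u = q ^ e - 1 := by
    rw [hu]
    exact orderOf_pow_orderOf_div horder0 (horder ▸ hdvd)
  set t : K := (u : K) with htdef
  have ht0 : t ≠ 0 := Units.ne_zero u
  set δ := Module.finrank F (adjoin F {t}) with hδ
  have hqe1 : 1 ≤ q ^ e := Nat.one_le_pow _ _ (by omega)
  -- δ ∣ e
  have hde : δ ∣ e := by
    rw [← pow_q_eq_iff]
    have hpow : u ^ (q ^ e - 1) = 1 := by rw [← hou]; exact pow_orderOf_eq_one u
    have : t ^ (q ^ e - 1) = 1 := by
      rw [htdef, ← Units.val_pow_eq_pow_val, hpow, Units.val_one]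
    calc t ^ q ^ e = t ^ (q ^ e - 1) * t := by rw [← pow_succ]; congr 1; omega
    _ = t := by rw [this, one_mul]
  -- e ∣ δ
  have hδ0 : δ ≠ 0 := Module.finrank_pos.ne'
  have hed : e ∣ δ := by
    have hfix : t ^ q ^ δ = t := (pow_q_eq_iff t δ).2 dvd_rfl
    have hqd1 : 1 ≤ q ^ δ := Nat.one_le_pow _ _ (by omega)
    have h2 : t ^ (q ^ δ - 1) * t = 1 * t := by
      rw [← pow_succ, one_mul]
      calc t ^ (q ^ δ - 1 + 1) = t ^ q ^ δ := by congr 1; omega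
      _ = t := hfix
    have h3 : t ^ (q ^ δ - 1) = 1 := mul_right_cancel₀ ht0 h2
    have h4 : u ^ (q ^ δ - 1) = 1 := Units.ext (by
      rw [Units.val_pow_eq_pow_val, Units.val_one]; exact h3)
    have h5 : orderOf u ∣ q ^ δ - 1 := orderOf_dvd_of_pow_eq_one h4
    rw [hou] at h5
    exact nat_dvd_of_pow_sub_one_dvd hq2 he0.ne' δ h5
  exact ⟨t, Nat.dvd_antisymm hde hed⟩

lemma squarefree_prod_primes : ∀ {s : Finset ℕ}, (∀ p ∈ s, p.Prime) →
    Squarefree (∏ p ∈ s, p) := by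
  intro s
  induction s using Finset.induction_on with
  | empty => intro _; simpa using squarefree_one
  | @insert p s' hps ih =>
    intro h
    rw [Finset.prod_insert hps]
    have hp : p.Prime := h p (mem_insert_self _ _)
    have hcop : Nat.Coprime p (∏ q ∈ s', q) := by
      apply Nat.Coprime.prod_right
      intro q hq
      exact (Nat.coprime_primes hp (h q (mem_insert_of_mem hq))).2
        (fun hpq => hps (hpq ▸ hq))
    exact (Nat.squarefree_mul hcop).2 ⟨hp.squarefree, ih fun q hq => h q (mem_insert_of_mem hq)⟩

lemma finrank_adjoin_sum [FiniteDimensional F K] {ι : Type*} (s : Finset ι) (u : ι → K)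
    (c : ι → ℕ) (hc : ∀ i ∈ s, Module.finrank F (adjoin F {u i}) = c i)
    (hsf : Squarefree (∏ i ∈ s, c i)) :
    Module.finrank F (adjoin F {∑ i ∈ s, u i}) = ∏ i ∈ s, c i := by
  classical
  set q := Fintype.card F with hqdef
  set L := ∏ i ∈ s, c i with hL
  have hL0 : L ≠ 0 := hsf.ne_zero
  set z := ∑ i ∈ s, u i with hz
  set δ := Module.finrank F (adjoin F {z}) with hδ
  -- upper: δ ∣ L
  have hfix : ∀ (E : ℕ), (∀ i ∈ s, c i ∣ E) → z ^ q ^ E = z := by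
    intro E hE
    obtain ⟨φ, hφ⟩ := exists_frobQ (F := F) (K := K) E
    have : φ z = z := by
      rw [hz, map_sum]
      refine Finset.sum_congr rfl fun i hi => ?_
      rw [hφ]
      exact (pow_q_eq_iff (u i) E).2 (hc i hi ▸ hE i hi)
    rw [← hφ z]; exact this
  have hδL : δ ∣ L := by
    rw [hδ, ← pow_q_eq_iff]
    exact hfix L fun i hi => Finset.dvd_prod_of_mem c hi
  -- exact: δ = L
  by_contra hne
  have hne' : δ ≠ L := fun h => hne (hδ ▸ h ▸ rfl)
  -- get a prime ℘ dividing L/δ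
  obtain ⟨w, hw⟩ := hδL
  have hw1 : w ≠ 1 := by
    intro h; rw [h, mul_one] at hw; exact hne' hw.symm
  obtain ⟨p, hp, hpw⟩ := Nat.exists_prime_and_dvd hw1
  have hpL : p ∣ L := hw ▸ Dvd.dvd.mul_left hpw δ
  set E := L / p with hEdef
  have hpE : p * E = L := Nat.mul_div_cancel' hpL
  have hp0 : p ≠ 0 := hp.ne_zero
  -- δ ∣ E
  have hδE : δ ∣ E := by
    obtain ⟨w', hw'⟩ := hpw
    refine ⟨w', ?_⟩
    have : p * (δ * w') = p * E := by
      rw [hpE, hw, hw']; ring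
    exact Nat.eq_of_mul_eq_mul_left (by omega) this |>.symm ▸ rfl
  -- the index i0 with p ∣ c i0
  have hdvd : p ∣ ∏ i ∈ s, c i := hL ▸ hpL
  obtain ⟨i0, hi0, hpc⟩ := (Nat.Prime.prime hp).exists_mem_finset_dvd hdvd
  -- ∏ over erase i0 divides E
  have hQE : (∏ i ∈ s.erase i0, c i) ∣ E := by
    obtain ⟨w', hw'⟩ := hpc
    have hL' : L = c i0 * ∏ i ∈ s.erase i0, c i := (Finset.mul_prod_erase s c hi0).symm
    have : p * E = p * (w' * ∏ i ∈ s.erase i0, c i) := by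
      rw [hpE, hL', hw']; ring
    exact ⟨w', (Nat.eq_of_mul_eq_mul_left (by omega) this).symm ▸ by ring⟩
  -- each u i, i ≠ i0 fixed by q^E power, and z fixed
  obtain ⟨φ, hφ⟩ := exists_frobQ (F := F) (K := K) E
  have hz_fix : φ z = z := by rw [hφ]; rw [← pow_q_eq_iff] at hδE; exact hδE
  have hui_fix : ∀ i ∈ s.erase i0, φ (u i) = u i := by
    intro i hi
    rw [hφ]
    refine (pow_q_eq_iff (u i) E).2 ?_
    rw [hc i (Finset.mem_of_mem_erase hi)]
    exact dvd_trans (Finset.dvd_prod_of_mem c hi) hQE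
  have hsplit : u i0 = z - ∑ i ∈ s.erase i0, u i := by
    rw [hz, ← Finset.add_sum_erase s u hi0]; ring
  have hu0_fix : u i0 ^ q ^ E = u i0 := by
    rw [← hφ]
    rw [hsplit, map_sub, hz_fix, map_sum]
    congr 1
    exact Finset.sum_congr rfl hui_fix
  have hc0E : c i0 ∣ E := by
    rw [← hc i0 hi0]
    exact (pow_q_eq_iff (u i0) E).1 hu0_fix
  -- contradiction with squarefree
  have : p * p ∣ L := by
    rw [← hpE]
    exact mul_dvd_mul_left p (dvd_trans hpc hc0E)
  exact hp.not_isUnit (hsf p this)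

lemma exists_ext (F : Type u) [Field F] [Fintype F] (N : ℕ) (hN : 0 < N) :
    ∃ (K : Type u) (_ : Field K) (_ : Algebra F K),
      FiniteDimensional F K ∧ Module.finrank F K = N := by
  classical
  have hq2 : 2 ≤ Fintype.card F := Fintype.one_lt_card
  refine ⟨(X ^ Fintype.card F ^ N - X : F[X]).SplittingField, inferInstance, inferInstance,
    inferInstance, ?_⟩
  have hsep : (X ^ Fintype.card F ^ N - X : F[X]).Separable := by
    obtain ⟨k, hp, hcard⟩ := FiniteField.card F (ringChar F)
    have hdvd : ringChar F ∣ Fintype.card F ^ N := by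
      refine dvd_pow ?_ hN.ne'
      rw [hcard]
      exact dvd_pow_self (ringChar F) k.2.ne'
    exact galois_poly_separable (ringChar F) _ hdvd
  have hne : (X ^ Fintype.card F ^ N - X : F[X]) ≠ 0 :=
    FiniteField.X_pow_card_pow_sub_X_ne_zero (K' := F) hN.ne' hq2
  have hdeg : (X ^ Fintype.card F ^ N - X : F[X]).natDegree = Fintype.card F ^ N :=
    FiniteField.X_pow_card_pow_sub_X_natDegree_eq F hN.ne' hq2
  obtain ⟨φ, hφ⟩ := exists_frobQ (F := F)
    (K := (X ^ Fintype.card F ^ N - X : F[X]).SplittingField) N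
  have hall : ∀ z : (X ^ Fintype.card F ^ N - X : F[X]).SplittingField,
      z ^ Fintype.card F ^ N = z := by
    have hadj : ∀ z : (X ^ Fintype.card F ^ N - X : F[X]).SplittingField,
        z ∈ Algebra.adjoin F ((X ^ Fintype.card F ^ N - X : F[X]).rootSet
          (X ^ Fintype.card F ^ N - X : F[X]).SplittingField) := by
      intro z
      rw [Polynomial.IsSplittingField.adjoin_rootSet]
      trivial
    intro z
    induction hadj z using Algebra.adjoin_induction with
    | mem x hx =>
        rw [Polynomial.mem_rootSet] at hx
        have h2 := hx.2
        rw [map_sub, map_pow, aeval_X, sub_eq_zero] at h2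
        exact h2
    | algebraMap r => exact algebraMap_pow_q N r
    | add x y hx hy ihx ihy => rw [← hφ (x + y), map_add, hφ x, hφ y, ihx, ihy]
    | mul x y hx hy ihx ihy => rw [mul_pow, ihx, ihy]
  haveI : Finite (X ^ Fintype.card F ^ N - X : F[X]).SplittingField :=
    Module.finite_of_finite F
  haveI : Fintype (X ^ Fintype.card F ^ N - X : F[X]).SplittingField := Fintype.ofFinite _
  have hroot : ∀ z : (X ^ Fintype.card F ^ N - X : F[X]).SplittingField,
      z ∈ (X ^ Fintype.card F ^ N - X : F[X]).rootSet _ := by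
    intro z
    rw [Polynomial.mem_rootSet]
    refine ⟨hne, ?_⟩
    rw [map_sub, map_pow, aeval_X, sub_eq_zero]
    exact hall z
  have hcardK : Fintype.card (X ^ Fintype.card F ^ N - X : F[X]).SplittingField
      = Fintype.card F ^ N := by
    have h1 := card_rootSet_eq_natDegree hsep
      (SplittingField.splits (X ^ Fintype.card F ^ N - X : F[X]))
    have h2 : (X ^ Fintype.card F ^ N - X : F[X]).rootSet
        (X ^ Fintype.card F ^ N - X : F[X]).SplittingField = Set.univ :=
      Set.eq_univ_of_forall hroot
    have hle1 : Fintype.card ((X ^ Fintype.card F ^ N - X : F[X]).rootSet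
        (X ^ Fintype.card F ^ N - X : F[X]).SplittingField)
        ≤ Fintype.card (X ^ Fintype.card F ^ N - X : F[X]).SplittingField :=
      Fintype.card_le_of_injective _ Subtype.val_injective
    have hle2 : Fintype.card (X ^ Fintype.card F ^ N - X : F[X]).SplittingField
        ≤ Fintype.card ((X ^ Fintype.card F ^ N - X : F[X]).rootSet
          (X ^ Fintype.card F ^ N - X : F[X]).SplittingField) :=
      Fintype.card_le_of_injective (fun z => ⟨z, hroot z⟩)
        (fun a b h => congrArg Subtype.val h)
    rw [hdeg] at h1
    omega
  have hcf := Module.card_eq_pow_finrank (K := F)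
    (V := (X ^ Fintype.card F ^ N - X : F[X]).SplittingField)
  apply Nat.pow_right_injective hq2
  show Fintype.card F ^ _ = Fintype.card F ^ N
  rw [← hcf, hcardK]

end Aux

set_option maxHeartbeats 2000000 in
theorem stmt8 (q : ℕ) (hq : IsPrimePow q) (F : Type u) [Field F] [Fintype F]
    (hF : Fintype.card F = q) (A : ℕ) (hA : q - 1 ≤ A) :
    ∃ (K : Type u) (_ : Field K) (_ : Algebra F K), FiniteDimensional F K ∧
      ∃ (x y : K) (a b : ℕ), 0 < a ∧ 0 < b ∧
        Module.finrank F (IntermediateField.adjoin F {x}) = a ∧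
        Module.finrank F (IntermediateField.adjoin F {y}) = b ∧
        ((Nat.gcd a b).primeFactors.filter
          fun p => ¬ p ∣ (a / Nat.gcd a b) * (b / Nat.gcd a b)).card = A ∧
        ∀ α β : F,
          IntermediateField.adjoin F {α • x + β • y} ≠
            IntermediateField.adjoin F {x, y} := by
  classical
  subst hF
  set q := Fintype.card F with hqdef
  have hq2 : 2 ≤ q := Fintype.one_lt_card
  -- the primes
  set π : ℕ → ℕ := Nat.nth Nat.Prime with hπdef
  have hπp : ∀ i : ℕ, (π i).Prime := Nat.prime_nth_prime
  have hπmono : StrictMono π := Nat.nth_strictMono Nat.infinite_setOf_prime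
  set ι : F ≃ Fin q := Fintype.equivFin F with hιdef
  set Pf : F → ℕ := fun γ => π (ι γ : ℕ) with hPfdef
  have hPfinj : Function.Injective Pf := fun a b h =>
    ι.injective (Fin.ext (hπmono.injective h))
  set S1 : Finset ℕ := (Finset.univ.erase (0 : F)).image Pf with hS1def
  set S2 : Finset ℕ := (range (A - (q - 1))).image (fun j => π (q + j)) with hS2def
  set m : ℕ := π (q + A) with hmdef
  set n : ℕ := π (q + A + 1) with hndef
  set T : Finset ℕ := S1 ∪ S2 with hTdef
  -- index bound for members of T
  have hT_idx : ∀ p ∈ T, ∃ i, i < q + A ∧ p = π i := by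
    intro p hp
    rcases Finset.mem_union.1 hp with h1 | h2
    · obtain ⟨γ, hγ, rfl⟩ := Finset.mem_image.1 h1
      exact ⟨(ι γ : ℕ), by have := (ι γ).2; omega, rfl⟩
    · obtain ⟨j, hj, rfl⟩ := Finset.mem_image.1 h2
      rw [Finset.mem_range] at hj
      exact ⟨q + j, by omega, rfl⟩
  have hTprime : ∀ p ∈ T, p.Prime := by
    intro p hp; obtain ⟨i, _, rfl⟩ := hT_idx p hp; exact hπp i
  have hmp : m.Prime := hπp _
  have hnp : n.Prime := hπp _
  have hmn : m ≠ n := fun h => by have := hπmono.injective h; omega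
  have hmT : m ∉ T := fun h => by
    obtain ⟨i, hi, he⟩ := hT_idx m h; have := hπmono.injective he; omega
  have hnT : n ∉ T := fun h => by
    obtain ⟨i, hi, he⟩ := hT_idx n h; have := hπmono.injective he; omega
  set Stot : Finset ℕ := insert m (insert n T) with hStotdef
  have hStotprime : ∀ p ∈ Stot, p.Prime := by
    intro p hp
    rcases Finset.mem_insert.1 hp with rfl | hp
    · exact hmp
    rcases Finset.mem_insert.1 hp with rfl | hp
    · exact hnp
    · exact hTprime p hp
  set d : ℕ := ∏ p ∈ T, p with hddef
  set P2 : ℕ := ∏ p ∈ S2, p with hP2def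
  set N : ℕ := ∏ p ∈ Stot, p with hNdef
  have hmnT : m ∉ insert n T := by
    rw [Finset.mem_insert]; push_neg; exact ⟨hmn, hmT⟩
  have hN_eq : N = m * (n * d) := by
    rw [hNdef, hStotdef, Finset.prod_insert hmnT, Finset.prod_insert hnT]
  have hsfN : Squarefree N := squarefree_prod_primes hStotprime
  have hd0 : 0 < d := Finset.prod_pos fun p hp => (hTprime p hp).pos
  have hm2 : 2 ≤ m := hmp.two_le
  have hn2 : 2 ≤ n := hnp.two_le
  have hN0 : 0 < N := Finset.prod_pos fun p hp => (hStotprime p hp).pos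
  -- subset relations
  have hS2T : S2 ⊆ T := Finset.subset_union_right
  have hS1T : S1 ⊆ T := Finset.subset_union_left
  have hTStot : T ⊆ Stot := fun p hp =>
    Finset.mem_insert_of_mem (Finset.mem_insert_of_mem hp)
  have hmStot : m ∈ Stot := Finset.mem_insert_self _ _
  have hnStot : n ∈ Stot := Finset.mem_insert_of_mem (Finset.mem_insert_self _ _)
  have hnS2 : n ∉ S2 := fun h => hnT (hS2T h)
  have hmS2 : m ∉ S2 := fun h => hmT (hS2T h)
  -- the extension field
  obtain ⟨K, fK, aK, fdK, hKrank⟩ := exists_ext F N hN0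
  -- the elements
  have hex_t : ∀ γ : F, ∃ w : K, γ ≠ 0 → Module.finrank F (adjoin F {w}) = Pf γ := by
    intro γ
    by_cases h0 : γ = 0
    · exact ⟨0, fun h => absurd h0 h⟩
    · have hmem : Pf γ ∈ S1 := Finset.mem_image.2
        ⟨γ, Finset.mem_erase.2 ⟨h0, Finset.mem_univ γ⟩, rfl⟩
      have hdvd : Pf γ ∣ N := Finset.dvd_prod_of_mem _ (hTStot (hS1T hmem))
      obtain ⟨w, hw⟩ := exists_elem_of_degree (hπp (ι γ : ℕ)).pos (hKrank ▸ hdvd)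
      exact ⟨w, fun _ => hw⟩
  choose t ht using hex_t
  have hnP2dvd : n * P2 ∣ N := by
    have h1 : n * P2 = ∏ p ∈ insert n S2, p := (Finset.prod_insert (f := id) hnS2).symm
    rw [h1]
    apply Finset.prod_dvd_prod_of_subset
    intro p hp
    rcases Finset.mem_insert.1 hp with rfl | hp
    · exact hnStot
    · exact hTStot (hS2T hp)
  have hmP2dvd : m * P2 ∣ N := by
    have h1 : m * P2 = ∏ p ∈ insert m S2, p := (Finset.prod_insert (f := id) hmS2).symm
    rw [h1]
    apply Finset.prod_dvd_prod_of_subset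
    intro p hp
    rcases Finset.mem_insert.1 hp with rfl | hp
    · exact hmStot
    · exact hTStot (hS2T hp)
  have hP20 : 0 < P2 := Finset.prod_pos fun p hp => (hTprime p (hS2T hp)).pos
  obtain ⟨sE, hsE⟩ := exists_elem_of_degree (e := n * P2) (by positivity) (hKrank ▸ hnP2dvd)
  obtain ⟨rE, hrE⟩ := exists_elem_of_degree (e := m * P2) (by positivity) (hKrank ▸ hmP2dvd)
  set x : K := (∑ γ ∈ Finset.univ.erase (0 : F), (-γ) • t γ) + rE with hxdef
  set y : K := (∑ γ ∈ Finset.univ.erase (0 : F), t γ) + sE with hydef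
  -- sum decompositions
  set uY : F → K := fun γ => if γ = 0 then sE else t γ with huYdef
  set cY : F → ℕ := fun γ => if γ = 0 then n * P2 else Pf γ with hcYdef
  set uX : F → K := fun γ => if γ = 0 then rE else (-γ) • t γ with huXdef
  set cX : F → ℕ := fun γ => if γ = 0 then m * P2 else Pf γ with hcXdef
  have hy_sum : y = ∑ γ ∈ Finset.univ, uY γ := by
    rw [← Finset.add_sum_erase _ uY (Finset.mem_univ (0 : F))]
    have h1 : uY 0 = sE := if_pos rfl
    have h2 : ∑ γ ∈ Finset.univ.erase (0 : F), uY γ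
        = ∑ γ ∈ Finset.univ.erase (0 : F), t γ :=
      Finset.sum_congr rfl fun γ hγ => if_neg (Finset.mem_erase.1 hγ).1
    rw [h1, h2, hydef, add_comm]
  have hx_sum : x = ∑ γ ∈ Finset.univ, uX γ := by
    rw [← Finset.add_sum_erase _ uX (Finset.mem_univ (0 : F))]
    have h1 : uX 0 = rE := if_pos rfl
    have h2 : ∑ γ ∈ Finset.univ.erase (0 : F), uX γ
        = ∑ γ ∈ Finset.univ.erase (0 : F), (-γ) • t γ :=
      Finset.sum_congr rfl fun γ hγ => if_neg (Finset.mem_erase.1 hγ).1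
    rw [h1, h2, hxdef, add_comm]
  -- products of the degree functions
  have hprod_erase : ∏ γ ∈ Finset.univ.erase (0 : F), Pf γ = ∏ p ∈ S1, p := by
    rw [hS1def, Finset.prod_image]
    intro a ha b hb hab
    exact hPfinj hab
  have hdisj : Disjoint S1 S2 := by
    rw [Finset.disjoint_left]
    rintro p hp1 hp2
    obtain ⟨γ, hγ, rfl⟩ := Finset.mem_image.1 hp1
    obtain ⟨j, hj, he⟩ := Finset.mem_image.1 hp2
    have := hπmono.injective he.symm
    have h2 := (ι γ).2
    omega
  have hd_eq : d = (∏ p ∈ S1, p) * P2 := by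
    rw [hddef, hTdef, Finset.prod_union hdisj]
  have hcY_prod : ∏ γ ∈ Finset.univ, cY γ = d * n := by
    rw [← Finset.mul_prod_erase _ cY (Finset.mem_univ (0 : F))]
    have h1 : cY 0 = n * P2 := if_pos rfl
    have h2 : ∏ γ ∈ Finset.univ.erase (0 : F), cY γ
        = ∏ γ ∈ Finset.univ.erase (0 : F), Pf γ :=
      Finset.prod_congr rfl fun γ hγ => if_neg (Finset.mem_erase.1 hγ).1
    rw [h1, h2, hprod_erase, hd_eq]
    ring
  have hcX_prod : ∏ γ ∈ Finset.univ, cX γ = d * m := by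
    rw [← Finset.mul_prod_erase _ cX (Finset.mem_univ (0 : F))]
    have h1 : cX 0 = m * P2 := if_pos rfl
    have h2 : ∏ γ ∈ Finset.univ.erase (0 : F), cX γ
        = ∏ γ ∈ Finset.univ.erase (0 : F), Pf γ :=
      Finset.prod_congr rfl fun γ hγ => if_neg (Finset.mem_erase.1 hγ).1
    rw [h1, h2, hprod_erase, hd_eq]
    ring
  -- divisibility of the two degrees into N
  have hdnN : d * n ∣ N := ⟨m, by rw [hN_eq]; ring⟩
  have hdmN : d * m ∣ N := ⟨n, by rw [hN_eq]; ring⟩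
  have hdnN_lt : d * n < N := by
    rw [hN_eq]; nlinarith [hd0, hm2, hn2]
  have hdmN_lt : d * m < N := by
    rw [hN_eq]; nlinarith [hd0, hm2, hn2]
  -- squarefreeness of degrees
  have hsfdn : Squarefree (d * n) := Squarefree.squarefree_of_dvd hdnN hsfN
  have hsfdm : Squarefree (d * m) := Squarefree.squarefree_of_dvd hdmN hsfN
  -- degrees of x and y
  have hyb : Module.finrank F (adjoin F {y}) = d * n := by
    rw [hy_sum]
    have hc : ∀ γ ∈ Finset.univ, Module.finrank F (adjoin F {uY γ}) = cY γ := by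
      intro γ _
      by_cases h0 : γ = 0
      · subst h0
        show Module.finrank F (adjoin F {uY 0}) = cY 0
        rw [show uY 0 = sE from if_pos rfl, show cY 0 = n * P2 from if_pos rfl]
        exact hsE
      · rw [show uY γ = t γ from if_neg h0, show cY γ = Pf γ from if_neg h0]
        exact ht γ h0
    have hh := finrank_adjoin_sum (F := F) Finset.univ uY cY hc (by rw [hcY_prod]; exact hsfdn)
    rw [hh, hcY_prod]
  have hxa : Module.finrank F (adjoin F {x}) = d * m := by
    rw [hx_sum]
    have hc : ∀ γ ∈ Finset.univ, Module.finrank F (adjoin F {uX γ}) = cX γ := by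
      intro γ _
      by_cases h0 : γ = 0
      · subst h0
        show Module.finrank F (adjoin F {uX 0}) = cX 0
        rw [show uX 0 = rE from if_pos rfl, show cX 0 = m * P2 from if_pos rfl]
        exact hrE
      · rw [show uX γ = (-γ) • t γ from if_neg h0, show cX γ = Pf γ from if_neg h0,
          adjoin_smul_eq (neg_ne_zero.2 h0)]
        exact ht γ h0
    have hh := finrank_adjoin_sum (F := F) Finset.univ uX cX hc (by rw [hcX_prod]; exact hsfdm)
    rw [hh, hcX_prod]
  -- gcd and the filter condition
  have hcopmn : Nat.gcd m n = 1 := (Nat.coprime_primes hmp hnp).2 hmn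
  have hgcd : Nat.gcd (d * m) (d * n) = d := by
    rw [Nat.gcd_mul_left, hcopmn, mul_one]
  have hfilter : ∀ p ∈ T, ¬ p ∣ m * n := by
    intro p hp hdvd
    obtain ⟨i, hi, rfl⟩ := hT_idx p hp
    rcases (Nat.Prime.dvd_mul (hπp i)).1 hdvd with h | h
    · have h2 := hπmono.injective ((Nat.prime_dvd_prime_iff_eq (hπp i) hmp).1 h)
      omega
    · have h2 := hπmono.injective ((Nat.prime_dvd_prime_iff_eq (hπp i) hnp).1 h)
      omega
  have hcardT : T.card = A := by
    rw [hTdef, Finset.card_union_of_disjoint hdisj]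
    have h1 : S1.card = q - 1 := by
      rw [hS1def, Finset.card_image_of_injective _ hPfinj,
        Finset.card_erase_of_mem (Finset.mem_univ 0), Finset.card_univ]
    have h2 : S2.card = A - (q - 1) := by
      rw [hS2def, Finset.card_image_of_injective _
        (fun a b h => by have := hπmono.injective h; omega), Finset.card_range]
    omega
  -- rank of adjoin {x, y}
  haveI : Finite K := Module.finite_of_finite F
  have hxy_rank : Module.finrank F (adjoin F ({x, y} : Set K)) = N := by
    haveI : Fintype (adjoin F ({x, y} : Set K)) := Fintype.ofFinite _
    have hxS : x ∈ adjoin F ({x, y} : Set K) := subset_adjoin F _ (by simp)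
    have hyS : y ∈ adjoin F ({x, y} : Set K) := subset_adjoin F _ (by simp)
    have hcardS : Fintype.card (adjoin F ({x, y} : Set K))
        = q ^ Module.finrank F (adjoin F ({x, y} : Set K)) := Module.card_eq_pow_finrank
    have hxfix : x ^ q ^ Module.finrank F (adjoin F ({x, y} : Set K)) = x := by
      have h := FiniteField.pow_card (⟨x, hxS⟩ : adjoin F ({x, y} : Set K))
      rw [hcardS] at h
      have h2 := congrArg Subtype.val h
      push_cast at h2
      exact h2
    have hyfix : y ^ q ^ Module.finrank F (adjoin F ({x, y} : Set K)) = y := by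
      have h := FiniteField.pow_card (⟨y, hyS⟩ : adjoin F ({x, y} : Set K))
      rw [hcardS] at h
      have h2 := congrArg Subtype.val h
      push_cast at h2
      exact h2
    have h1 : d * m ∣ Module.finrank F (adjoin F ({x, y} : Set K)) := by
      rw [← hxa]; exact (pow_q_eq_iff x _).1 hxfix
    have h2 : d * n ∣ Module.finrank F (adjoin F ({x, y} : Set K)) := by
      rw [← hyb]; exact (pow_q_eq_iff y _).1 hyfix
    have hlcm : Nat.lcm (d * m) (d * n) = N := by
      rw [Nat.lcm_mul_left, Nat.Coprime.lcm_eq_mul hcopmn, hN_eq]; ring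
    have hNf : N ∣ Module.finrank F (adjoin F ({x, y} : Set K)) :=
      hlcm ▸ Nat.lcm_dvd h1 h2
    have hpos : 0 < Module.finrank F (adjoin F ({x, y} : Set K)) := Module.finrank_pos
    have hle : Module.finrank F (adjoin F ({x, y} : Set K)) ≤ N := by
      rw [← hKrank]
      exact Submodule.finrank_le (adjoin F ({x, y} : Set K)).toSubalgebra.toSubmodule
    exact le_antisymm hle (Nat.le_of_dvd hpos hNf)
  -- conclusion
  refine ⟨K, fK, aK, fdK, x, y, d * m, d * n, by positivity, by positivity, hxa, hyb, ?_, ?_⟩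
  · rw [hgcd, Nat.mul_div_cancel_left m hd0, Nat.mul_div_cancel_left n hd0, hddef,
      Nat.primeFactors_prod hTprime, Finset.filter_true_of_mem
        (fun p hp => hfilter p hp), hcardT]
  · intro α β hEq
    have hfe : Module.finrank F (adjoin F {α • x + β • y}) = N := by
      have h2 := congrArg (fun (S : IntermediateField F K) => Module.finrank F S) hEq
      rw [h2, hxy_rank]
    suffices hlt : Module.finrank F (adjoin F {α • x + β • y}) < N by omega
    by_cases hα : α = 0
    · by_cases hβ : β = 0
      · rw [hα, hβ, zero_smul, zero_smul, add_zero]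
        have hdvd : Module.finrank F (adjoin F ({0} : Set K)) ∣ d * m :=
          (pow_q_eq_iff (0 : K) (d * m)).1 (zero_pow (by positivity))
        calc Module.finrank F (adjoin F ({0} : Set K)) ≤ d * m :=
              Nat.le_of_dvd (by positivity) hdvd
        _ < N := hdmN_lt
      · rw [hα, zero_smul, zero_add, adjoin_smul_eq hβ, hyb]
        exact hdnN_lt
    · by_cases hβ : β = 0
      · rw [hβ, zero_smul, add_zero, adjoin_smul_eq hα, hxa]
        exact hdmN_lt
      · -- main case
        set γ : F := α⁻¹ * β with hγdef
        have hγ0 : γ ≠ 0 := mul_ne_zero (inv_ne_zero hα) hβ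
        have hzdecomp : α • x + β • y = α • (x + γ • y) := by
          have hb : β = α * γ := by rw [hγdef, ← mul_assoc, mul_inv_cancel₀ hα, one_mul]
          conv_rhs => rw [smul_add, smul_smul]
          rw [← hb]
        rw [hzdecomp, adjoin_smul_eq hα]
        have hPfγStot : Pf γ ∈ Stot := hTStot (hS1T (Finset.mem_image.2
          ⟨γ, Finset.mem_erase.2 ⟨hγ0, Finset.mem_univ γ⟩, rfl⟩))
        have hmulE : Pf γ * ∏ p ∈ Stot.erase (Pf γ), p = N :=
          Finset.mul_prod_erase Stot (fun p => p) hPfγStot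
        have hE0 : 0 < ∏ p ∈ Stot.erase (Pf γ), p :=
          Finset.prod_pos fun p hp => (hStotprime p (Finset.mem_of_mem_erase hp)).pos
        have hE_lt : (∏ p ∈ Stot.erase (Pf γ), p) < N := by
          have h2 : 2 ≤ Pf γ := (hπp _).two_le
          nlinarith [hE0, hmulE]
        obtain ⟨φ, hφ⟩ := exists_frobQ (F := F) (K := K) (∏ p ∈ Stot.erase (Pf γ), p)
        have hφsm : ∀ (cc : F) (v : K), φ (cc • v) = cc • φ v := by
          intro cc v
          rw [Algebra.smul_def, map_mul, hφ ((algebraMap F K) cc), algebraMap_pow_q,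
            ← Algebra.smul_def]
        have hfix_t : ∀ γ' : F, γ' ≠ 0 → γ' ≠ γ → φ (t γ') = t γ' := by
          intro γ' h0 hne
          have hmem : Pf γ' ∈ Stot.erase (Pf γ) := Finset.mem_erase.2
            ⟨fun h => hne (hPfinj h), hTStot (hS1T (Finset.mem_image.2
              ⟨γ', Finset.mem_erase.2 ⟨h0, Finset.mem_univ γ'⟩, rfl⟩))⟩
          rw [hφ]
          refine (pow_q_eq_iff (t γ') _).2 ?_
          rw [ht γ' h0]
          exact Finset.dvd_prod_of_mem _ hmem
        have hsubs : ∀ p ∈ insert n S2, p ∈ Stot.erase (Pf γ) := by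
          intro p hp
          rcases Finset.mem_insert.1 hp with rfl | hp
          · refine Finset.mem_erase.2 ⟨fun h => ?_, hnStot⟩
            have := hπmono.injective h.symm
            have h2 := (ι γ).2
            omega
          · obtain ⟨j, hj, rfl⟩ := Finset.mem_image.1 hp
            refine Finset.mem_erase.2 ⟨fun h => ?_, hTStot (hS2T (Finset.mem_image.2 ⟨j, hj, rfl⟩))⟩
            have := hπmono.injective h.symm
            have h2 := (ι γ).2
            omega
        have hsubr : ∀ p ∈ insert m S2, p ∈ Stot.erase (Pf γ) := by
          intro p hp
          rcases Finset.mem_insert.1 hp with rfl | hp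
          · refine Finset.mem_erase.2 ⟨fun h => ?_, hmStot⟩
            have := hπmono.injective h.symm
            have h2 := (ι γ).2
            omega
          · obtain ⟨j, hj, rfl⟩ := Finset.mem_image.1 hp
            refine Finset.mem_erase.2 ⟨fun h => ?_, hTStot (hS2T (Finset.mem_image.2 ⟨j, hj, rfl⟩))⟩
            have := hπmono.injective h.symm
            have h2 := (ι γ).2
            omega
        have hfix_s : φ sE = sE := by
          rw [hφ]
          refine (pow_q_eq_iff sE _).2 ?_
          rw [hsE]
          calc (n * P2 : ℕ) = ∏ p ∈ insert n S2, p := (Finset.prod_insert (f := id) hnS2).symm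
          _ ∣ ∏ p ∈ Stot.erase (Pf γ), p := Finset.prod_dvd_prod_of_subset _ _ _ hsubs
        have hfix_r : φ rE = rE := by
          rw [hφ]
          refine (pow_q_eq_iff rE _).2 ?_
          rw [hrE]
          calc (m * P2 : ℕ) = ∏ p ∈ insert m S2, p := (Finset.prod_insert (f := id) hmS2).symm
          _ ∣ ∏ p ∈ Stot.erase (Pf γ), p := Finset.prod_dvd_prod_of_subset _ _ _ hsubr
        have hsum : (∑ γ' ∈ Finset.univ.erase (0 : F), (-γ') • t γ')
            + (∑ γ' ∈ Finset.univ.erase (0 : F), γ • t γ')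
            = ∑ γ' ∈ Finset.univ.erase (0 : F), (γ - γ') • t γ' := by
          rw [← Finset.sum_add_distrib]
          refine Finset.sum_congr rfl fun γ' _ => ?_
          rw [sub_smul, neg_smul]
          abel
        have hdecomp : x + γ • y
            = (∑ γ' ∈ Finset.univ.erase (0 : F), (γ - γ') • t γ') + (rE + γ • sE) := by
          rw [hxdef, hydef, smul_add, Finset.smul_sum, ← hsum]
          abel
        have hfixw : φ (x + γ • y) = x + γ • y := by
          rw [hdecomp, map_add, map_add, map_sum, hfix_r, hφsm, hfix_s]
          congr 1
          refine Finset.sum_congr rfl fun γ' hγ' => ?_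
          by_cases hgg : γ' = γ
          · rw [hgg, sub_self, zero_smul, map_zero]
          · rw [hφsm, hfix_t γ' (Finset.mem_erase.1 hγ').1 hgg]
        have hpowid : (x + γ • y) ^ q ^ (∏ p ∈ Stot.erase (Pf γ), p) = x + γ • y := by
          rw [← hφ]; exact hfixw
        have hdvd := (pow_q_eq_iff (x + γ • y) _).1 hpowid
        calc Module.finrank F (adjoin F {x + γ • y}) ≤ ∏ p ∈ Stot.erase (Pf γ), p :=
              Nat.le_of_dvd hE0 hdvd
        _ < N := hE_lt
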